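/- Let R be a ring in which p is nilpotent. Then the kernel I_{n,R} of the projection W_n(R) → R is a nilpotent ideal, and consequently the continuous map Spec R → Spec W_n(R) induced by the projection is a homeomorphism; an element of W_n(R) is invertible if and only if its image in R is invertible. -/

import Mathlib

/-- The projection `W_{n+1}(R) → R`, `(a₀, …, a_n) ↦ a₀`, as a ring homomorphism. -/
noncomputable def truncatedWittVectorProj (p : ℕ) [Fact p.Prime] (n : ℕ)
    (R : Type*) [CommRing R] : TruncatedWittVector p (n + 1) R →+* R :=
  RingHom.liftOfRightInverse (WittVector.truncate (n + 1)) TruncatedWittVector.out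
    TruncatedWittVector.truncateFun_out
    ⟨WittVector.ghostComponent 0, by
      intro x hx
      rw [WittVector.mem_ker_truncate] at hx
      rw [RingHom.mem_ker, WittVector.ghostComponent_apply, wittPolynomial_zero,
        MvPolynomial.aeval_X]
      exact hx 0 n.succ_pos⟩

section Aux

variable {p : ℕ} [Fact p.Prime] {n : ℕ} {R : Type*} [CommRing R]

lemma WittVector.coeff_zero_eq_ghost (x : WittVector p R) :
    x.coeff 0 = WittVector.ghostComponent 0 x := by
  rw [WittVector.ghostComponent_apply, wittPolynomial_zero, MvPolynomial.aeval_X]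

lemma proj_truncate_apply (x : WittVector p R) :
    truncatedWittVectorProj p n R (WittVector.truncate (n + 1) x) = x.coeff 0 := by
  unfold truncatedWittVectorProj
  exact (RingHom.liftOfRightInverse_comp_apply _ _ _ _ x).trans
    (WittVector.coeff_zero_eq_ghost x).symm

lemma proj_apply (x : TruncatedWittVector p (n + 1) R) :
    truncatedWittVectorProj p n R x = x.coeff 0 := by
  conv_lhs => rw [← TruncatedWittVector.truncateFun_out x]
  rw [show (WittVector.truncateFun (n + 1) x.out)
      = WittVector.truncate (n + 1) x.out from rfl, proj_truncate_apply]
  exact_mod_cast TruncatedWittVector.coeff_out x 0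

lemma proj_surjective : Function.Surjective (truncatedWittVectorProj p n R) := by
  intro r
  refine ⟨WittVector.truncate (n + 1) (WittVector.mk p fun _ => r), ?_⟩
  rw [proj_truncate_apply, WittVector.coeff_mk]

/-- `V^[i] z` has vanishing coefficients below `i`. -/
lemma coeff_iterate_verschiebung_lt (z : WittVector p R) :
    ∀ i j : ℕ, j < i → (WittVector.verschiebung^[i] z).coeff j = 0 := by
  intro i
  induction i with
  | zero => intro j hj; omega
  | succ i ih =>
    intro j hj
    rw [Function.iterate_succ_apply']
    match j with
    | 0 => exact WittVector.verschiebung_coeff_zero _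
    | j + 1 =>
      rw [WittVector.verschiebung_coeff_succ]
      exact ih j (by omega)

lemma frobenius_iterate_natCast_pow (k : ℕ) :
    ∀ j : ℕ, WittVector.frobenius^[j] ((p : WittVector p R) ^ k) = (p : WittVector p R) ^ k := by
  intro j
  induction j with
  | zero => rfl
  | succ m ihm => rw [Function.iterate_succ_apply', ihm, map_pow, map_natCast]

/-- Product of two Witt vectors with vanishing zeroth coefficient is `p` times
a Witt vector with vanishing zeroth coefficient. -/
lemma mul_eq_p_mul (x y : WittVector p R) (hx : x.coeff 0 = 0) (hy : y.coeff 0 = 0) :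
    ∃ z : WittVector p R, z.coeff 0 = 0 ∧ x * y = (p : WittVector p R) * z := by
  have hx' : x = WittVector.verschiebung (x.shift 1) := by
    have := WittVector.eq_iterate_verschiebung (x := x) (n := 1)
      (by intro i hi; interval_cases i; exact hx)
    simpa using this
  have hy' : y = WittVector.verschiebung (y.shift 1) := by
    have := WittVector.eq_iterate_verschiebung (x := y) (n := 1)
      (by intro i hi; interval_cases i; exact hy)
    simpa using this
  have hpsm : ∀ w : WittVector p R, (p : WittVector p R) * WittVector.verschiebung w
      = WittVector.verschiebung ((p : WittVector p R) * w) := by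
    intro w
    rw [← nsmul_eq_mul, ← nsmul_eq_mul]
    exact (map_nsmul WittVector.verschiebung p w).symm
  refine ⟨WittVector.verschiebung (x.shift 1 * y.shift 1), WittVector.verschiebung_coeff_zero _, ?_⟩
  calc x * y = WittVector.verschiebung (x.shift 1) * WittVector.verschiebung (y.shift 1) := by
        rw [← hx', ← hy']
    _ = WittVector.verschiebung (x.shift 1 * WittVector.frobenius
          (WittVector.verschiebung (y.shift 1))) :=
        (WittVector.verschiebung_mul_frobenius _ _).symm
    _ = WittVector.verschiebung (x.shift 1 * (y.shift 1 * (p : WittVector p R))) := by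
        rw [WittVector.frobenius_verschiebung]
    _ = WittVector.verschiebung ((p : WittVector p R) * (x.shift 1 * y.shift 1)) := by
        congr 1; ring
    _ = (p : WittVector p R) * WittVector.verschiebung (x.shift 1 * y.shift 1) :=
        (hpsm _).symm

/-- If `p ^ k = 0` in `R`, then `p ^ (k * i)` has vanishing coefficients below `i`. -/
lemma coeff_pow_p_lt {k : ℕ} (hk : (p : R) ^ k = 0) :
    ∀ i : ℕ, ∀ j < i, ((p : WittVector p R) ^ (k * i)).coeff j = 0 := by
  intro i
  induction i with
  | zero => intro j hj; omega
  | succ i ih =>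
    intro j hj
    set x : WittVector p R := (p : WittVector p R) ^ (k * i) with hxdef
    have hx : x = WittVector.verschiebung^[i] (x.shift i) :=
      WittVector.eq_iterate_verschiebung ih
    have key : (p : WittVector p R) ^ (k * (i + 1))
        = WittVector.verschiebung^[i] (x.shift i * WittVector.frobenius^[i]
            ((p : WittVector p R) ^ k)) := by
      conv_lhs => rw [show (p : WittVector p R) ^ (k * (i + 1))
          = x * (p : WittVector p R) ^ k from by rw [hxdef, ← pow_add, Nat.mul_succ]]
      conv_lhs => rw [hx]
      rw [WittVector.iterate_verschiebung_mul_left]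
    rw [key]
    rcases Nat.lt_or_ge j i with h | h
    · exact coeff_iterate_verschiebung_lt _ i j h
    · have hji : j = i := by omega
      subst hji
      have : (WittVector.verschiebung^[j] (x.shift j * WittVector.frobenius^[j]
          ((p : WittVector p R) ^ k))).coeff (0 + j)
          = (x.shift j * WittVector.frobenius^[j] ((p : WittVector p R) ^ k)).coeff 0 :=
        WittVector.iterate_verschiebung_coeff _ j 0
      rw [zero_add] at this
      rw [this, WittVector.coeff_zero_eq_ghost, map_mul]
      have hF := frobenius_iterate_natCast_pow (p := p) (R := R) k j
      have : WittVector.ghostComponent (p := p) (R := R) 0 ((p : WittVector p R) ^ k) = 0 := by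
        rw [map_pow, map_natCast, hk]
      rw [hF, this, mul_zero]

end Aux

/-- Let `R` be a ring in which `p` is nilpotent.  Then the kernel `I_{n+1,R}` of the
projection `W_{n+1}(R) → R` is a nilpotent ideal, the induced map `Spec R → Spec W_{n+1}(R)`
is a homeomorphism, and an element of `W_{n+1}(R)` is invertible if and only if its image
in `R` is invertible. -/
theorem truncatedWittVector_proj_nilpotent_homeo_units (p : ℕ) [Fact p.Prime] (n : ℕ)
    (R : Type*) [CommRing R] (hpnil : ∃ k : ℕ, (p : R) ^ k = 0) :
    IsNilpotent (RingHom.ker (truncatedWittVectorProj p n R)) ∧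
    IsHomeomorph (PrimeSpectrum.comap (truncatedWittVectorProj p n R)) ∧
    ∀ x : TruncatedWittVector p (n + 1) R,
      IsUnit x ↔ IsUnit (truncatedWittVectorProj p n R x) := by
  obtain ⟨k, hk⟩ := hpnil
  set f := truncatedWittVectorProj p n R with hf
  set K := RingHom.ker f with hKdef
  set M := k * (n + 1) with hM
  -- `p ^ M = 0` in the truncated Witt vectors
  have hp0 : (p : TruncatedWittVector p (n + 1) R) ^ M = 0 := by
    have h1 : (p : TruncatedWittVector p (n + 1) R) ^ M
        = WittVector.truncate (n + 1) ((p : WittVector p R) ^ M) := by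
      rw [map_pow, map_natCast]
    rw [h1]
    apply TruncatedWittVector.ext
    intro i
    rw [WittVector.coeff_truncate, TruncatedWittVector.coeff_zero]
    exact coeff_pow_p_lt hk (n + 1) i i.is_lt
  have hmem : ∀ x : TruncatedWittVector p (n + 1) R, x ∈ K ↔ x.coeff 0 = 0 := by
    intro x; rw [hKdef, RingHom.mem_ker, hf, proj_apply]
  -- `K * K ≤ (p) * K`
  have hKK : K * K ≤ Ideal.span {(p : TruncatedWittVector p (n + 1) R)} * K := by
    rw [Ideal.mul_le]
    intro a ha b hb
    have ha0 : (TruncatedWittVector.out a).coeff 0 = 0 :=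
      (TruncatedWittVector.coeff_out a 0).trans ((hmem a).mp ha)
    have hb0 : (TruncatedWittVector.out b).coeff 0 = 0 :=
      (TruncatedWittVector.coeff_out b 0).trans ((hmem b).mp hb)
    obtain ⟨z, hz0, hzz⟩ := mul_eq_p_mul _ _ ha0 hb0
    have hab : a * b = WittVector.truncate (n + 1) (a.out * b.out) := by
      rw [map_mul]
      conv_lhs => rw [← TruncatedWittVector.truncateFun_out a,
        ← TruncatedWittVector.truncateFun_out b]
      rfl
    rw [hab, hzz, map_mul, map_natCast]
    refine Ideal.mul_mem_mul (Ideal.mem_span_singleton_self _) ((hmem _).mpr ?_)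
    have := WittVector.coeff_truncate (p := p) z (0 : Fin (n + 1))
    simpa [this] using hz0
  -- `K ^ (m + 1) ≤ (p) ^ m * K`
  have hpow : ∀ m : ℕ, K ^ (m + 1)
      ≤ Ideal.span {(p : TruncatedWittVector p (n + 1) R)} ^ m * K := by
    intro m
    induction m with
    | zero => simp
    | succ m ih =>
      calc K ^ (m + 2) = K ^ (m + 1) * K := by rw [pow_succ]
        _ ≤ Ideal.span {(p : TruncatedWittVector p (n + 1) R)} ^ m * K * K :=
            Ideal.mul_mono_left ih
        _ = Ideal.span {(p : TruncatedWittVector p (n + 1) R)} ^ m * (K * K) := mul_assoc _ _ _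
        _ ≤ Ideal.span {(p : TruncatedWittVector p (n + 1) R)} ^ m
            * (Ideal.span {(p : TruncatedWittVector p (n + 1) R)} * K) :=
            Ideal.mul_mono_right hKK
        _ = Ideal.span {(p : TruncatedWittVector p (n + 1) R)} ^ (m + 1) * K := by
            rw [← mul_assoc, ← pow_succ]
  have hKnil : K ^ (M + 1) = ⊥ := by
    have h1 : Ideal.span {(p : TruncatedWittVector p (n + 1) R)} ^ M = ⊥ := by
      rw [Ideal.span_singleton_pow, hp0, Ideal.span_singleton_eq_bot]
    refine le_bot_iff.mp ?_
    calc K ^ (M + 1) ≤ Ideal.span {(p : TruncatedWittVector p (n + 1) R)} ^ M * K := hpow M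
      _ = ⊥ * K := by rw [h1]
      _ = ⊥ := by rw [Submodule.bot_mul]
  have hsurj : Function.Surjective f := proj_surjective
  refine ⟨⟨M + 1, by rw [Ideal.zero_eq_bot]; exact hKnil⟩, ?_, ?_⟩
  · rw [isHomeomorph_iff_isEmbedding_surjective]
    refine ⟨(PrimeSpectrum.isClosedEmbedding_comap_of_surjective _ _ hsurj).toIsEmbedding, ?_⟩
    apply Set.range_eq_univ.mp
    rw [range_comap_of_surjective _ f hsurj, Set.eq_univ_iff_forall]
    intro P
    rw [PrimeSpectrum.mem_zeroLocus]
    intro z hz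
    exact Ideal.IsPrime.le_of_pow_le (n := M + 1) (by rw [hKnil]; exact bot_le) hz
  · intro x
    constructor
    · exact fun h => h.map f
    · intro h
      obtain ⟨v, hv⟩ := h
      obtain ⟨y, hy⟩ := hsurj (↑v⁻¹)
      have hxy : f (x * y) = 1 := by
        rw [map_mul, hy, ← hv, Units.mul_inv]
      have hz : x * y - 1 ∈ K := by
        rw [hKdef, RingHom.mem_ker, map_sub, hxy, map_one, sub_self]
      have hnil : IsNilpotent (x * y - 1) := ⟨M + 1, by
        have h2 := Ideal.pow_mem_pow hz (M + 1)
        rw [hKnil] at h2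
        simpa using h2⟩
      have hu : IsUnit (x * y) := by
        simpa using IsNilpotent.isUnit_add_one hnil
      exact isUnit_of_mul_isUnit_left hu
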